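/- Let g be a finite-dimensional complex Lie algebra. Then HL²(g,ℂ) is linearly isomorphic to the direct sum H²(g,ℂ) ⊕ ker I ⊕ (Im I ∩ B³(g,ℂ)). -/

import Mathlib

noncomputable section

open Module

variable (L : Type*) [LieRing L] [LieAlgebra ℂ L]

/-- The trivial Leibniz coboundary, as a linear map on the space of all ℂ-valued
2-cochains. -/
def leibnizDC : (L → L → ℂ) →ₗ[ℂ] (L → L → L → ℂ) where
  toFun ψ := fun X Y Z => -ψ ⁅X, Y⁆ Z + ψ X ⁅Y, Z⁆ + ψ ⁅X, Z⁆ Y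
  map_add' a b := by
    funext X Y Z
    simp only [Pi.add_apply, neg_add]
    ring
  map_smul' c a := by
    funext X Y Z
    simp only [Pi.smul_apply, RingHom.id_apply, smul_eq_mul]
    ring

/-- The subspace of bilinear forms among all ℂ-valued 2-cochains. -/
def BilC : Submodule ℂ (L → L → ℂ) where
  carrier := {ψ | ∃ Ψ : L →ₗ[ℂ] L →ₗ[ℂ] ℂ, ∀ X Y : L, ψ X Y = Ψ X Y}
  add_mem' := by
    rintro a b ⟨A, hA⟩ ⟨B, hB⟩
    exact ⟨A + B, fun X Y => by simp [hA X Y, hB X Y]⟩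
  zero_mem' := ⟨0, by simp⟩
  smul_mem' := by
    rintro c a ⟨A, hA⟩
    exact ⟨c • A, fun X Y => by simp [hA X Y]⟩

/-- Alternating ℂ-valued 2-cochains. -/
def AltC : Submodule ℂ (L → L → ℂ) where
  carrier := {ψ | ∀ X Y : L, ψ X Y = - ψ Y X}
  add_mem' := by
    intro a b ha hb X Y
    simp only [Pi.add_apply, ha X Y, hb X Y, neg_add]
  zero_mem' := by simp
  smul_mem' := by
    intro c a ha X Y
    simp only [Pi.smul_apply, ha X Y, smul_neg]

/-- Symmetric ℂ-valued 2-cochains. -/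
def SymmC : Submodule ℂ (L → L → ℂ) where
  carrier := {ψ | ∀ X Y : L, ψ X Y = ψ Y X}
  add_mem' := by
    intro a b ha hb X Y
    simp only [Pi.add_apply, ha X Y, hb X Y]
  zero_mem' := by simp
  smul_mem' := by
    intro c a ha X Y
    simp only [Pi.smul_apply, ha X Y]

/-- Trivial Leibniz 2-cocycles: bilinear forms with vanishing trivial Leibniz coboundary. -/
def ZL2C : Submodule ℂ (L → L → ℂ) := BilC L ⊓ LinearMap.ker (leibnizDC L)

/-- Chevalley–Eilenberg (alternating) 2-cocycles with trivial coefficients. -/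
def Z2C : Submodule ℂ (L → L → ℂ) := ZL2C L ⊓ AltC L

/-- Symmetric trivial Leibniz 2-cocycles. -/
def ZL20C : Submodule ℂ (L → L → ℂ) := ZL2C L ⊓ SymmC L

/-- 2-coboundaries with trivial coefficients. -/
def B2C : Submodule ℂ (L → L → ℂ) where
  carrier := {ψ | ∃ f : L →ₗ[ℂ] ℂ, ∀ X Y : L, ψ X Y = - f ⁅X, Y⁆}
  add_mem' := by
    rintro a b ⟨f₁, h₁⟩ ⟨f₂, h₂⟩
    refine ⟨f₁ + f₂, fun X Y => ?_⟩
    simp only [Pi.add_apply, h₁ X Y, h₂ X Y, LinearMap.add_apply, neg_add]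
  zero_mem' := ⟨0, by simp⟩
  smul_mem' := by
    rintro c a ⟨f, h⟩
    refine ⟨c • f, fun X Y => ?_⟩
    simp only [Pi.smul_apply, h X Y, LinearMap.smul_apply, smul_neg]

/-- Chevalley–Eilenberg 3-coboundaries with trivial coefficients: trivial Leibniz
coboundaries of alternating bilinear 2-cochains (on which the Leibniz and
Chevalley–Eilenberg differentials coincide). -/
def B3C : Submodule ℂ (L → L → L → ℂ) := (BilC L ⊓ AltC L).map (leibnizDC L)

/-- The image `Im I` of the Koszul map: the space of trilinear forms spanned by
`(X,Y,Z) ↦ B([X,Y],Z)` with `B` an invariant symmetric bilinear form. -/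
def ImIC : Submodule ℂ (L → L → L → ℂ) :=
  Submodule.span ℂ {T | ∃ B : L →ₗ[ℂ] L →ₗ[ℂ] ℂ,
    (∀ X Y : L, B X Y = B Y X) ∧ (∀ X Y Z : L, B ⁅Z, X⁆ Y = - B X ⁅Z, Y⁆) ∧
    T = fun X Y Z => B ⁅X, Y⁆ Z}

/-- The kernel `ker I` of the Koszul map: invariant symmetric bilinear forms vanishing on
brackets. -/
def KerIC : Submodule ℂ (L → L → ℂ) where
  carrier := {ψ | ψ ∈ BilC L ∧ (∀ X Y : L, ψ X Y = ψ Y X) ∧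
    (∀ X Y Z : L, ψ ⁅Z, X⁆ Y = - ψ X ⁅Z, Y⁆) ∧ (∀ X Y Z : L, ψ ⁅X, Y⁆ Z = 0)}
  add_mem' := by
    rintro a b ⟨ha0, ha1, ha3, ha4⟩ ⟨hb0, hb1, hb3, hb4⟩
    refine ⟨add_mem ha0 hb0, fun X Y => ?_, fun X Y Z => ?_, fun X Y Z => ?_⟩
    · simp only [Pi.add_apply, ha1 X Y, hb1 X Y]
    · simp only [Pi.add_apply, ha3 X Y Z, hb3 X Y Z, neg_add]
    · simp only [Pi.add_apply, ha4 X Y Z, hb4 X Y Z, add_zero]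
  zero_mem' := ⟨zero_mem _, fun X Y => rfl, fun X Y Z => by simp, fun X Y Z => rfl⟩
  smul_mem' := by
    rintro c a ⟨h0, h1, h3, h4⟩
    refine ⟨Submodule.smul_mem _ _ h0, fun X Y => ?_, fun X Y Z => ?_, fun X Y Z => ?_⟩
    · simp only [Pi.smul_apply, h1 X Y]
    · simp only [Pi.smul_apply, h3 X Y Z, smul_neg]
    · simp only [Pi.smul_apply, h4 X Y Z, smul_zero]


/-- Symmetrization of a 2-cochain. -/
def symPart : (L → L → ℂ) →ₗ[ℂ] (L → L → ℂ) where
  toFun ψ := fun X Y => (2⁻¹ : ℂ) * (ψ X Y + ψ Y X)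
  map_add' a b := by funext X Y; simp only [Pi.add_apply]; ring
  map_smul' c a := by funext X Y; simp only [Pi.smul_apply, RingHom.id_apply, smul_eq_mul]; ring

/-- Antisymmetrization of a 2-cochain. -/
def altPart : (L → L → ℂ) →ₗ[ℂ] (L → L → ℂ) where
  toFun ψ := fun X Y => (2⁻¹ : ℂ) * (ψ X Y - ψ Y X)
  map_add' a b := by funext X Y; simp only [Pi.add_apply]; ring
  map_smul' c a := by funext X Y; simp only [Pi.smul_apply, RingHom.id_apply, smul_eq_mul]; ring

/-- The Koszul map on cochains. -/
def koszulDC : (L → L → ℂ) →ₗ[ℂ] (L → L → L → ℂ) where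
  toFun ψ := fun X Y Z => ψ ⁅X, Y⁆ Z
  map_add' a b := by funext X Y Z; simp
  map_smul' c a := by funext X Y Z; simp

/-- Inclusion of bilinear maps into 2-cochains. -/
def bilIncl : (L →ₗ[ℂ] L →ₗ[ℂ] ℂ) →ₗ[ℂ] (L → L → ℂ) where
  toFun B := fun X Y => B X Y
  map_add' a b := by funext X Y; simp
  map_smul' c a := by funext X Y; simp

/-- Koszul map on bilinear maps. -/
def triJ : (L →ₗ[ℂ] L →ₗ[ℂ] ℂ) →ₗ[ℂ] (L → L → L → ℂ) where
  toFun B := fun X Y Z => B ⁅X, Y⁆ Z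
  map_add' a b := by funext X Y Z; simp
  map_smul' c a := by funext X Y Z; simp

/-- Invariant symmetric bilinear maps. -/
def InvSym : Submodule ℂ (L →ₗ[ℂ] L →ₗ[ℂ] ℂ) where
  carrier := {B | (∀ X Y : L, B X Y = B Y X) ∧ ∀ X Y Z : L, B ⁅Z, X⁆ Y = - B X ⁅Z, Y⁆}
  add_mem' := by
    rintro a b ⟨ha1, ha2⟩ ⟨hb1, hb2⟩
    refine ⟨fun X Y => ?_, fun X Y Z => ?_⟩
    · simp [LinearMap.add_apply, ha1 X Y, hb1 X Y]
    · simp [LinearMap.add_apply, ha2 X Y Z, hb2 X Y Z]; ring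
  zero_mem' := by constructor <;> simp
  smul_mem' := by
    rintro c a ⟨h1, h2⟩
    refine ⟨fun X Y => ?_, fun X Y Z => ?_⟩
    · simp [h1 X Y]
    · simp [h2 X Y Z]

example : True := trivial

set_option linter.unusedSectionVars false in
lemma leibnizDC_apply (ψ : L → L → ℂ) (X Y Z : L) :
    leibnizDC L ψ X Y Z = -ψ ⁅X, Y⁆ Z + ψ X ⁅Y, Z⁆ + ψ ⁅X, Z⁆ Y := rfl

lemma zl2c_E {ψ : L → L → ℂ} (hψ : ψ ∈ ZL2C L) (X Y Z : L) :
    -ψ ⁅X, Y⁆ Z + ψ X ⁅Y, Z⁆ + ψ ⁅X, Z⁆ Y = 0 := by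
  obtain ⟨-, hk⟩ := hψ
  have := congrFun (congrFun (congrFun (LinearMap.mem_ker.mp hk) X) Y) Z
  simpa [leibnizDC_apply] using this

omit [LieAlgebra ℂ L] in
lemma lie_swap (X Y : L) : ⁅Y, X⁆ = -⁅X, Y⁆ := (lie_skew Y X).symm

lemma zl2c_key {ψ : L → L → ℂ} (hψ : ψ ∈ ZL2C L) (X Y Z : L) :
    ψ X ⁅Y, Z⁆ + ψ ⁅Y, Z⁆ X + ψ ⁅X, Z⁆ Y + ψ Y ⁅X, Z⁆ = 0 := by
  obtain ⟨⟨Ψ, hΨ⟩, -⟩ := id hψ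
  have h1 := zl2c_E L hψ X Y Z
  have h2 := zl2c_E L hψ Y X Z
  have hskew : ψ ⁅Y, X⁆ Z = - ψ ⁅X, Y⁆ Z := by
    rw [hΨ, hΨ, lie_swap, map_neg, LinearMap.neg_apply]
  rw [hskew] at h2
  linear_combination h1 + h2

set_option linter.unusedSectionVars false in
lemma symPart_apply (ψ : L → L → ℂ) (X Y : L) :
    symPart L ψ X Y = (2⁻¹ : ℂ) * (ψ X Y + ψ Y X) := rfl

set_option linter.unusedSectionVars false in
lemma altPart_apply (ψ : L → L → ℂ) (X Y : L) :
    altPart L ψ X Y = (2⁻¹ : ℂ) * (ψ X Y - ψ Y X) := rfl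

lemma symPart_mem_bil {ψ : L → L → ℂ} (h : ψ ∈ BilC L) : symPart L ψ ∈ BilC L := by
  obtain ⟨Ψ, hΨ⟩ := h
  refine ⟨(2⁻¹ : ℂ) • (Ψ + Ψ.flip), fun X Y => ?_⟩
  simp [symPart_apply, hΨ, LinearMap.flip_apply, smul_eq_mul]; ring

lemma altPart_mem_bil {ψ : L → L → ℂ} (h : ψ ∈ BilC L) : altPart L ψ ∈ BilC L := by
  obtain ⟨Ψ, hΨ⟩ := h
  refine ⟨(2⁻¹ : ℂ) • (Ψ - Ψ.flip), fun X Y => ?_⟩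
  simp [altPart_apply, hΨ, LinearMap.flip_apply, smul_eq_mul, mul_sub]

set_option linter.unusedSectionVars false in
lemma symPart_symm (ψ : L → L → ℂ) (X Y : L) : symPart L ψ X Y = symPart L ψ Y X := by
  simp [symPart_apply]; ring

set_option linter.unusedSectionVars false in
lemma altPart_mem_alt (ψ : L → L → ℂ) : altPart L ψ ∈ AltC L := by
  intro X Y
  simp only [altPart_apply]; ring

set_option linter.unusedSectionVars false in
lemma sym_add_alt (ψ : L → L → ℂ) : symPart L ψ + altPart L ψ = ψ := by
  funext X Y
  simp only [Pi.add_apply, symPart_apply, altPart_apply]; ring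

/-- The symmetric part of a Leibniz cocycle is invariant. -/
lemma symPart_inv {ψ : L → L → ℂ} (hψ : ψ ∈ ZL2C L) (X Y Z : L) :
    symPart L ψ ⁅Z, X⁆ Y = - symPart L ψ X ⁅Z, Y⁆ := by
  obtain ⟨⟨Ψ, hΨ⟩, -⟩ := id hψ
  have keyA := zl2c_key L hψ Y Z X
  have keyB := zl2c_key L hψ X Z Y
  have e1 : ψ ⁅Y, X⁆ Z = - ψ ⁅X, Y⁆ Z := by
    rw [hΨ, hΨ, lie_swap, map_neg, LinearMap.neg_apply]
  have e2 : ψ Z ⁅Y, X⁆ = - ψ Z ⁅X, Y⁆ := by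
    rw [hΨ, hΨ, lie_swap, map_neg]
  rw [e1, e2] at keyA
  simp only [symPart_apply]
  linear_combination (2⁻¹ : ℂ) * keyA + (2⁻¹ : ℂ) * keyB

/-- The Koszul form of the symmetric part of a Leibniz cocycle is the coboundary of the
alternating part. -/
lemma key_b3 {ψ : L → L → ℂ} (hψ : ψ ∈ ZL2C L) :
    leibnizDC L (altPart L ψ) = koszulDC L (symPart L ψ) := by
  funext X Y Z
  have h1 := zl2c_E L hψ X Y Z
  have h2 := zl2c_key L hψ X Y Z
  simp only [leibnizDC_apply, koszulDC, LinearMap.coe_mk, AddHom.coe_mk,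
    altPart_apply, symPart_apply]
  linear_combination h1 - (2⁻¹ : ℂ) * h2

set_option linter.unusedSectionVars false
lemma mem_altC {ψ : L → L → ℂ} : ψ ∈ AltC L ↔ ∀ X Y : L, ψ X Y = -ψ Y X := Iff.rfl

lemma mem_bilC {ψ : L → L → ℂ} :
    ψ ∈ BilC L ↔ ∃ Ψ : L →ₗ[ℂ] L →ₗ[ℂ] ℂ, ∀ X Y : L, ψ X Y = Ψ X Y := Iff.rfl

/-- Restriction of the symmetrization to Leibniz cocycles. -/
def f1 : ↥(ZL2C L) →ₗ[ℂ] (L → L → ℂ) := symPart L ∘ₗ (ZL2C L).subtype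

/-- The space of symmetric parts of Leibniz cocycles. -/
def SymS : Submodule ℂ (L → L → ℂ) := LinearMap.range (f1 L)

/-- Restriction of the Koszul map to `SymS`. -/
def f2 : ↥(SymS L) →ₗ[ℂ] (L → L → L → ℂ) := koszulDC L ∘ₗ (SymS L).subtype

lemma f1_apply (x : ↥(ZL2C L)) : f1 L x = symPart L (x : L → L → ℂ) := rfl

lemma f2_apply (x : ↥(SymS L)) : f2 L x = koszulDC L (x : L → L → ℂ) := rfl

lemma ker_f1 : LinearMap.ker (f1 L) = Submodule.comap (ZL2C L).subtype (Z2C L) := by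
  ext x
  obtain ⟨ψ, hψ⟩ := x
  simp only [LinearMap.mem_ker, Submodule.mem_comap, Submodule.subtype_apply, Z2C,
    Submodule.mem_inf, f1_apply]
  constructor
  · intro h
    refine ⟨hψ, fun X Y => ?_⟩
    have h' := congrFun (congrFun h X) Y
    simp only [symPart_apply, Pi.zero_apply] at h'
    linear_combination 2 * h'
  · rintro ⟨-, halt⟩
    funext X Y
    simp only [symPart_apply, Pi.zero_apply, halt X Y]
    ring

lemma z2c_le : Z2C L ≤ ZL2C L := inf_le_left

lemma b2c_le_z2c : B2C L ≤ Z2C L := by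
  rintro ψ ⟨f, hf⟩
  refine ⟨⟨⟨-((LinearMap.llcomp ℂ L L ℂ f) ∘ₗ (LieAlgebra.ad ℂ L : L →ₗ[ℂ] Module.End ℂ L)), fun X Y => ?_⟩, ?_⟩,
    fun X Y => ?_⟩
  · simp [hf X Y, LieAlgebra.ad_apply]
  · show leibnizDC L ψ = 0
    funext X Y Z
    simp only [leibnizDC_apply, hf, Pi.zero_apply]
    have : ⁅⁅X, Y⁆, Z⁆ = ⁅X, ⁅Y, Z⁆⁆ - ⁅Y, ⁅X, Z⁆⁆ := lie_lie X Y Z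
    have h2 : ⁅⁅X, Z⁆, Y⁆ = -⁅Y, ⁅X, Z⁆⁆ := lie_swap L Y ⁅X, Z⁆
    rw [h2, this, map_sub, map_neg]
    ring
  · rw [hf X Y, hf Y X, lie_swap L X Y, map_neg]
    ring

lemma b2c_le : B2C L ≤ ZL2C L := le_trans (b2c_le_z2c L) (z2c_le L)

lemma imIC_eq : ImIC L = (InvSym L).map (triJ L) := by
  rw [ImIC]
  have hset : {T : L → L → L → ℂ | ∃ B : L →ₗ[ℂ] L →ₗ[ℂ] ℂ, (∀ X Y : L, B X Y = B Y X) ∧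
      (∀ X Y Z : L, B ⁅Z, X⁆ Y = - B X ⁅Z, Y⁆) ∧ T = fun X Y Z => B ⁅X, Y⁆ Z}
      = ↑((InvSym L).map (triJ L)) := by
    ext T
    simp only [Set.mem_setOf_eq, SetLike.mem_coe, Submodule.mem_map]
    constructor
    · rintro ⟨B, h1, h2, rfl⟩
      exact ⟨B, ⟨h1, h2⟩, rfl⟩
    · rintro ⟨B, ⟨h1, h2⟩, rfl⟩
      exact ⟨B, h1, h2, rfl⟩
  rw [hset, Submodule.span_eq]

lemma kerIC_le_symS : KerIC L ≤ SymS L := by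
  rintro ψ ⟨h0, h1, h3, h4⟩
  have hz : ψ ∈ ZL2C L := by
    refine ⟨h0, ?_⟩
    show leibnizDC L ψ = 0
    funext X Y Z
    rw [leibnizDC_apply, h4, h4, h1 X ⁅Y, Z⁆, h4]
    show -(0:ℂ) + 0 + 0 = 0
    ring
  exact ⟨⟨ψ, hz⟩, by
    funext X Y
    show (2⁻¹ : ℂ) * (ψ X Y + ψ Y X) = ψ X Y
    rw [← h1 X Y]
    ring⟩

lemma ker_f2 : LinearMap.ker (f2 L) = Submodule.comap (SymS L).subtype (KerIC L) := by
  ext x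
  obtain ⟨s, hs⟩ := x
  simp only [LinearMap.mem_ker, Submodule.mem_comap, Submodule.subtype_apply, f2_apply]
  constructor
  · intro h
    have h0 : ∀ X Y Z : L, s ⁅X, Y⁆ Z = 0 := fun X Y Z => by
      have := congrFun (congrFun (congrFun h X) Y) Z
      simpa [koszulDC] using this
    obtain ⟨y, hy⟩ := hs
    have hbil : s ∈ BilC L := by rw [← hy]; exact symPart_mem_bil L y.2.1
    have hsym : ∀ X Y : L, s X Y = s Y X := by
      rw [← hy]; exact symPart_symm L y
    refine ⟨hbil, hsym, fun X Y Z => ?_, h0⟩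
    rw [hsym X ⁅Z, Y⁆, h0, h0]
    ring
  · rintro ⟨-, -, -, h4⟩
    funext X Y Z
    show s ⁅X, Y⁆ Z = 0
    exact h4 X Y Z

lemma range_f2 : LinearMap.range (f2 L) = ImIC L ⊓ B3C L := by
  apply le_antisymm
  · rintro T ⟨⟨s, hs⟩, rfl⟩
    obtain ⟨y, hy⟩ := hs
    obtain ⟨ψ, hψ⟩ := y
    constructor
    · rw [imIC_eq]
      obtain ⟨Ψ, hΨ⟩ := symPart_mem_bil L hψ.1
      refine Submodule.mem_map.mpr ⟨Ψ, ⟨fun X Y => ?_, fun X Y Z => ?_⟩, ?_⟩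
      · rw [← hΨ, ← hΨ]; exact symPart_symm L ψ X Y
      · rw [← hΨ, ← hΨ]; exact symPart_inv L hψ X Y Z
      · funext X Y Z
        show Ψ ⁅X, Y⁆ Z = s ⁅X, Y⁆ Z
        rw [← hΨ, ← hy]
        rfl
    · refine Submodule.mem_map.mpr
        ⟨altPart L ψ, ⟨altPart_mem_bil L hψ.1, altPart_mem_alt L ψ⟩, ?_⟩
      rw [key_b3 L hψ]
      show koszulDC L (symPart L ψ) = koszulDC L s
      rw [← hy]
      rfl
  · rintro T ⟨hTi, hTb⟩
    rw [imIC_eq] at hTi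
    obtain ⟨B, ⟨hBsym, hBinv⟩, rfl⟩ := hTi
    obtain ⟨ω, ⟨hωbil, hωalt⟩, hωeq⟩ := hTb
    set s : L → L → ℂ := fun X Y => B X Y with hs
    have hcyc : ∀ X Y Z : L, B ⁅Y, Z⁆ X = B ⁅X, Y⁆ Z := fun X Y Z => by
      rw [hBinv Z X Y, lie_swap L X Y, map_neg, neg_neg, hBsym]
    have hψmem : s + ω ∈ ZL2C L := by
      refine ⟨add_mem ⟨B, fun X Y => rfl⟩ hωbil, ?_⟩
      show leibnizDC L (s + ω) = 0
      rw [map_add]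
      funext X Y Z
      have hT := congrFun (congrFun (congrFun hωeq X) Y) Z
      have c1 : B X ⁅Y, Z⁆ = B ⁅X, Y⁆ Z := by rw [hBsym, hcyc X Y Z]
      have c2 : B ⁅X, Z⁆ Y = - B ⁅X, Y⁆ Z := by
        rw [hcyc Y X Z, lie_swap L X Y, map_neg, LinearMap.neg_apply]
      show leibnizDC L s X Y Z + leibnizDC L ω X Y Z = 0
      rw [hT, leibnizDC_apply]
      show -(B ⁅X, Y⁆ Z) + B X ⁅Y, Z⁆ + B ⁅X, Z⁆ Y + B ⁅X, Y⁆ Z = 0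
      rw [c1, c2]
      ring
    have hsympart : f1 L ⟨s + ω, hψmem⟩ = s := by
      funext X Y
      rw [f1_apply, symPart_apply]
      show (2⁻¹ : ℂ) * ((s X Y + ω X Y) + (s Y X + ω Y X)) = s X Y
      rw [hωalt X Y]
      show (2⁻¹ : ℂ) * ((B X Y + -ω Y X) + (B Y X + ω Y X)) = B X Y
      rw [← hBsym X Y]
      ring
    refine ⟨⟨s, ⟨⟨s + ω, hψmem⟩, hsympart⟩⟩, ?_⟩
    funext X Y Z
    show s ⁅X, Y⁆ Z = B ⁅X, Y⁆ Z
    rfl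

lemma bilC_eq_range : BilC L = LinearMap.range (bilIncl L) := by
  ext ψ
  constructor
  · rintro ⟨Ψ, hΨ⟩
    exact ⟨Ψ, by funext X Y; exact (hΨ X Y).symm⟩
  · rintro ⟨Ψ, rfl⟩
    exact ⟨Ψ, fun X Y => rfl⟩

set_option maxHeartbeats 2000000 in
set_option synthInstance.maxHeartbeats 1000000 in
theorem stmt5' [FiniteDimensional ℂ L] :
    Nonempty ((↥(ZL2C L) ⧸ Submodule.comap (ZL2C L).subtype (B2C L)) ≃ₗ[ℂ]
      ((↥(Z2C L) ⧸ Submodule.comap (Z2C L).subtype (B2C L)) ×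
        ↥(KerIC L) × ↥(ImIC L ⊓ B3C L))) := by
  haveI hBil : FiniteDimensional ℂ ↥(BilC L) := by
    rw [bilC_eq_range]; infer_instance
  haveI hZL2 : FiniteDimensional ℂ ↥(ZL2C L) :=
    Submodule.finiteDimensional_of_le (inf_le_left : ZL2C L ≤ BilC L)
  haveI hZ2 : FiniteDimensional ℂ ↥(Z2C L) :=
    Submodule.finiteDimensional_of_le (le_trans (z2c_le L) inf_le_left)
  haveI hKer : FiniteDimensional ℂ ↥(KerIC L) :=
    Submodule.finiteDimensional_of_le (fun ψ h => h.1)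
  haveI hBilAlt : FiniteDimensional ℂ ↥(BilC L ⊓ AltC L) :=
    Submodule.finiteDimensional_of_le inf_le_left
  haveI hB3 : FiniteDimensional ℂ ↥(B3C L) := by
    rw [show B3C L = LinearMap.range (leibnizDC L ∘ₗ (BilC L ⊓ AltC L).subtype) from by
      rw [B3C, LinearMap.range_comp, Submodule.range_subtype]]
    infer_instance
  haveI hIB3 : FiniteDimensional ℂ ↥(ImIC L ⊓ B3C L) :=
    Submodule.finiteDimensional_of_le inf_le_right
  haveI hSymS : FiniteDimensional ℂ ↥(SymS L) := by
    show FiniteDimensional ℂ ↥(LinearMap.range (f1 L)); infer_instance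
  -- rank-nullity for f1
  have h1 : finrank ℂ ↥(SymS L) + finrank ℂ ↥(LinearMap.ker (f1 L)) = finrank ℂ ↥(ZL2C L) :=
    LinearMap.finrank_range_add_finrank_ker (f1 L)
  have h1' : finrank ℂ ↥(LinearMap.ker (f1 L)) = finrank ℂ ↥(Z2C L) := by
    rw [ker_f1]
    exact (Submodule.comapSubtypeEquivOfLe (z2c_le L)).finrank_eq
  -- rank-nullity for f2
  have h2 : finrank ℂ ↥(LinearMap.range (f2 L)) + finrank ℂ ↥(LinearMap.ker (f2 L))
      = finrank ℂ ↥(SymS L) :=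
    LinearMap.finrank_range_add_finrank_ker (f2 L)
  have h2r : finrank ℂ ↥(LinearMap.range (f2 L)) = finrank ℂ ↥(ImIC L ⊓ B3C L) := by
    rw [range_f2]
  have h2k : finrank ℂ ↥(LinearMap.ker (f2 L)) = finrank ℂ ↥(KerIC L) := by
    rw [ker_f2]
    exact (Submodule.comapSubtypeEquivOfLe (kerIC_le_symS L)).finrank_eq
  -- quotient dimensions
  have hq1 : finrank ℂ (↥(ZL2C L) ⧸ Submodule.comap (ZL2C L).subtype (B2C L))
      + finrank ℂ ↥(Submodule.comap (ZL2C L).subtype (B2C L)) = finrank ℂ ↥(ZL2C L) :=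
    Submodule.finrank_quotient_add_finrank _
  have hq1' : finrank ℂ ↥(Submodule.comap (ZL2C L).subtype (B2C L)) = finrank ℂ ↥(B2C L) :=
    (Submodule.comapSubtypeEquivOfLe (b2c_le L)).finrank_eq
  have hq2 : finrank ℂ (↥(Z2C L) ⧸ Submodule.comap (Z2C L).subtype (B2C L))
      + finrank ℂ ↥(Submodule.comap (Z2C L).subtype (B2C L)) = finrank ℂ ↥(Z2C L) :=
    Submodule.finrank_quotient_add_finrank _
  have hq2' : finrank ℂ ↥(Submodule.comap (Z2C L).subtype (B2C L)) = finrank ℂ ↥(B2C L) :=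
    (Submodule.comapSubtypeEquivOfLe (b2c_le_z2c L)).finrank_eq
  apply FiniteDimensional.nonempty_linearEquiv_of_finrank_eq
  rw [Module.finrank_prod, Module.finrank_prod]
  omega

/-- For a finite-dimensional complex Lie algebra,
`HL²(g,ℂ) ≅ H²(g,ℂ) ⊕ ker I ⊕ (Im I ∩ B³(g,ℂ))`. -/
theorem stmt5 [FiniteDimensional ℂ L] :
    Nonempty ((↥(ZL2C L) ⧸ Submodule.comap (ZL2C L).subtype (B2C L)) ≃ₗ[ℂ]
      ((↥(Z2C L) ⧸ Submodule.comap (Z2C L).subtype (B2C L)) ×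
        ↥(KerIC L) × ↥(ImIC L ⊓ B3C L))) := by
  exact stmt5' L
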